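/- arXiv:2403.05681 — 2 statements merged into one kernel-verified Lean document; each statement's English description precedes it below -/
import Mathlib

section
/- Amplification by subsampling: let M^β be the mechanism that first includes each record of the input dataset independently with probability β (Poisson subsampling) and then applies M to the sampled dataset. If M^{β1} satisfies (ε1, δ1)-DP, then for any β2 < β1 the mechanism M^{β2} satisfies (ε2, δ2)-DP with ε2 = ln(1 + (β2/β1)(e^{ε1} − 1)) and δ2 = (β2/β1)·δ1. -/
open scoped ENNReal

/-- `(ε, δ)`-differential privacy with respect to a neighboring relation `N`. -/
def ADP {D Ω : Type*} (N : D → D → Prop) (M : D → PMF Ω) (ε δ : ℝ) : Prop :=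
  ∀ d d', N d d' → ∀ O : Set Ω,
    (M d).toOuterMeasure O ≤
      ENNReal.ofReal (Real.exp ε) * (M d').toOuterMeasure O + ENNReal.ofReal δ

/-- Neighboring datasets differ by addition or removal of one record. -/
def Neighbor {X : Type*} (d d' : List X) : Prop :=
  ∃ l₁ l₂ x, (d = l₁ ++ x :: l₂ ∧ d' = l₁ ++ l₂) ∨ (d' = l₁ ++ x :: l₂ ∧ d = l₁ ++ l₂)

/-- Poisson subsampling: each record of the dataset is included independently with
probability `β`. -/
noncomputable def poissonSample {X : Type*} (β : ℝ≥0∞) (h : β ≤ 1) :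
    List X → PMF (List X)
  | [] => PMF.pure []
  | x :: xs => (PMF.bernoulli β.toNNReal (by simpa using ENNReal.toNNReal_mono ENNReal.one_ne_top h)).bind fun b =>
      (poissonSample β h xs).map fun s => if b then x :: s else s

/-! ### Expectation of a function with respect to a `PMF` -/

noncomputable def pexp {α : Type*} (p : PMF α) (f : α → ℝ≥0∞) : ℝ≥0∞ := ∑' a, p a * f a

lemma pexp_pure {α : Type*} (a : α) (f : α → ℝ≥0∞) : pexp (PMF.pure a) f = f a := by
  unfold pexp
  rw [tsum_eq_single a (by intro b hb; simp [PMF.pure_apply, hb])]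
  simp [PMF.pure_apply]

lemma pexp_bind {α β : Type*} (p : PMF α) (g : α → PMF β) (f : β → ℝ≥0∞) :
    pexp (p.bind g) f = pexp p (fun a => pexp (g a) f) := by
  unfold pexp
  simp only [PMF.bind_apply]
  calc ∑' b, (∑' a, p a * g a b) * f b
      = ∑' b, ∑' a, p a * (g a b * f b) := by
        refine tsum_congr fun b => ?_
        rw [← ENNReal.tsum_mul_right]
        exact tsum_congr fun a => mul_assoc _ _ _
  _ = ∑' a, ∑' b, p a * (g a b * f b) := ENNReal.tsum_comm
  _ = ∑' a, p a * ∑' b, g a b * f b := tsum_congr fun a => ENNReal.tsum_mul_left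

lemma pexp_map {α β : Type*} (p : PMF α) (g : α → β) (f : β → ℝ≥0∞) :
    pexp (p.map g) f = pexp p (fun a => f (g a)) := by
  rw [PMF.map, pexp_bind]
  simp [pexp_pure, Function.comp]

lemma pexp_const {α : Type*} (p : PMF α) (c : ℝ≥0∞) : pexp p (fun _ => c) = c := by
  unfold pexp
  rw [ENNReal.tsum_mul_right, PMF.tsum_coe, one_mul]

lemma pexp_mono {α : Type*} (p : PMF α) {f g : α → ℝ≥0∞} (h : ∀ a, f a ≤ g a) :
    pexp p f ≤ pexp p g :=
  ENNReal.tsum_le_tsum fun a => mul_le_mul_right (h a) _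

lemma pexp_add {α : Type*} (p : PMF α) (f g : α → ℝ≥0∞) :
    pexp p (fun a => f a + g a) = pexp p f + pexp p g := by
  unfold pexp
  rw [← ENNReal.tsum_add]
  congr 1; ext a; ring

lemma pexp_mul_left {α : Type*} (p : PMF α) (c : ℝ≥0∞) (f : α → ℝ≥0∞) :
    pexp p (fun a => c * f a) = c * pexp p f := by
  unfold pexp
  rw [← ENNReal.tsum_mul_left]
  congr 1; ext a; ring

lemma pexp_le_one {α : Type*} (p : PMF α) {f : α → ℝ≥0∞} (h : ∀ a, f a ≤ 1) :
    pexp p f ≤ 1 := by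
  calc pexp p f ≤ pexp p (fun _ => 1) := pexp_mono p h
  _ = 1 := pexp_const p 1

lemma pexp_bernoulli {β : ℝ≥0∞} (h : β ≤ 1) (f : Bool → ℝ≥0∞) :
    pexp (PMF.bernoulli β.toNNReal (by simpa using ENNReal.toNNReal_mono ENNReal.one_ne_top h)) f = (1 - β) * f false + β * f true := by
  unfold pexp
  generalize_proofs hp
  rw [tsum_bool, PMF.bernoulli_apply, PMF.bernoulli_apply]
  simp [ENNReal.coe_toNNReal (h.trans_lt ENNReal.one_lt_top).ne]

lemma pexp_poisson_cons {X : Type*} (β : ℝ≥0∞) (h : β ≤ 1) (x : X) (xs : List X)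
    (f : List X → ℝ≥0∞) :
    pexp (poissonSample β h (x :: xs)) f =
      (1 - β) * pexp (poissonSample β h xs) f +
        β * pexp (poissonSample β h xs) (fun s => f (x :: s)) := by
  show pexp ((PMF.bernoulli β.toNNReal (by simpa using ENNReal.toNNReal_mono ENNReal.one_ne_top h)).bind fun b =>
      (poissonSample β h xs).map fun s => if b then x :: s else s) f = _
  rw [pexp_bind, pexp_bernoulli h]
  simp [pexp_map]

lemma pexp_poisson_append {X : Type*} (β : ℝ≥0∞) (h : β ≤ 1) (as bs : List X)
    (f : List X → ℝ≥0∞) :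
    pexp (poissonSample β h (as ++ bs)) f =
      pexp (poissonSample β h as) (fun s₁ =>
        pexp (poissonSample β h bs) (fun s₂ => f (s₁ ++ s₂))) := by
  induction as generalizing f with
  | nil => simp [poissonSample, pexp_pure]
  | cons x xs ih =>
      rw [List.cons_append, pexp_poisson_cons, pexp_poisson_cons, ih, ih]
      simp [List.cons_append]

lemma one_sub_mul_helper {γ β : ℝ≥0∞} (hγ : γ ≤ 1) (hβ : β ≤ 1) :
    (1 - γ) + γ * (1 - β) = 1 - γ * β := by
  have hγt : γ ≠ ∞ := (hγ.trans_lt (by norm_num)).ne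
  rw [ENNReal.mul_sub (fun _ _ => hγt), mul_one]
  exact tsub_add_tsub_cancel hγ (mul_le_of_le_one_right' hβ)

lemma pexp_poisson_thin {X : Type*} (γ β₁ : ℝ≥0∞) (hγ : γ ≤ 1) (h₁ : β₁ ≤ 1)
    (β₂ : ℝ≥0∞) (hmul : γ * β₁ = β₂) (h₂ : β₂ ≤ 1) (d : List X) (f : List X → ℝ≥0∞) :
    pexp (poissonSample β₂ h₂ d) f =
      pexp (poissonSample γ hγ d) (fun t => pexp (poissonSample β₁ h₁ t) f) := by
  subst hmul
  induction d generalizing f with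
  | nil => simp [poissonSample, pexp_pure]
  | cons x xs ih =>
      rw [pexp_poisson_cons]
      conv_rhs => rw [pexp_poisson_cons]
      have inner : ∀ s, pexp (poissonSample β₁ h₁ (x :: s)) f =
          (1 - β₁) * pexp (poissonSample β₁ h₁ s) f +
            β₁ * pexp (poissonSample β₁ h₁ s) (fun t => f (x :: t)) :=
        fun s => pexp_poisson_cons β₁ h₁ x s f
      simp only [inner]
      rw [pexp_add, pexp_mul_left, pexp_mul_left, ← ih, ← ih]
      rw [mul_add, ← mul_assoc, ← mul_assoc, ← add_assoc, ← add_mul,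
        one_sub_mul_helper hγ h₁]

lemma toOuterMeasure_apply_le_one {α : Type*} (p : PMF α) (s : Set α) :
    p.toOuterMeasure s ≤ 1 := by
  rw [PMF.toOuterMeasure_apply]
  calc ∑' x, s.indicator p x ≤ ∑' x, p x :=
        ENNReal.tsum_le_tsum fun x => Set.indicator_le_self s p x
  _ = 1 := PMF.tsum_coe p

/-- Amplification by subsampling: if the mechanism `M` subsampled at rate `β₁` is
`(ε₁, δ₁)`-DP, then for any `β₂ < β₁` the mechanism subsampled at rate `β₂` is
`(ε₂, δ₂)`-DP with `ε₂ = log (1 + (β₂/β₁)(exp ε₁ − 1))` and `δ₂ = (β₂/β₁) δ₁`. -/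
theorem amplification_by_subsampling {X Ω : Type*} (M : List X → PMF Ω)
    (β₁ β₂ : ℝ≥0∞) (h₁ : β₁ ≤ 1) (h₂ : β₂ < β₁)
    (ε₁ δ₁ : ℝ) (hε₁ : 0 ≤ ε₁) (hδ₁ : 0 ≤ δ₁)
    (H : ADP Neighbor (fun d => (poissonSample β₁ h₁ d).bind M) ε₁ δ₁) :
    ADP Neighbor (fun d => (poissonSample β₂ (h₂.le.trans h₁) d).bind M)
      (Real.log (1 + (β₂ / β₁).toReal * (Real.exp ε₁ - 1)))
      ((β₂ / β₁).toReal * δ₁) := by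
  intro d d' hN O
  simp only
  -- basic facts about γ = β₂ / β₁
  set γ : ℝ≥0∞ := β₂ / β₁ with hγdef
  have hβ₁0 : β₁ ≠ 0 := fun h => by simp [h] at h₂
  have hβ₁t : β₁ ≠ ∞ := (h₁.trans_lt (by norm_num)).ne
  have hγt : γ ≠ ∞ := (ENNReal.div_lt_top (h₂.le.trans h₁ |>.trans_lt (by norm_num)).ne hβ₁0).ne
  have hmul : γ * β₁ = β₂ := ENNReal.div_mul_cancel hβ₁0 hβ₁t
  have hγ1 : γ ≤ 1 := by
    rw [hγdef, ENNReal.div_le_iff hβ₁0 hβ₁t, one_mul]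
    exact h₂.le
  -- abbreviations
  set a : ℝ≥0∞ := ENNReal.ofReal (Real.exp ε₁) with hadef
  set δ : ℝ≥0∞ := ENNReal.ofReal δ₁ with hδdef
  set ν : List X → ℝ≥0∞ := fun t => ((poissonSample β₁ h₁ t).bind M).toOuterMeasure O with hνdef
  have hν1 : ∀ t, ν t ≤ 1 := fun t => toOuterMeasure_apply_le_one _ O
  have hνt : ∀ t, ν t ≠ ∞ := fun t => ((hν1 t).trans_lt (by norm_num)).ne
  -- the β₂-subsampled mechanism, expressed via γ-subsampling followed by β₁-subsampling
  have key : ∀ e : List X, ((poissonSample β₂ (h₂.le.trans h₁) e).bind M).toOuterMeasure O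
      = pexp (poissonSample γ hγ1 e) ν := by
    intro e
    rw [PMF.toOuterMeasure_bind_apply]
    have : (∑' t, poissonSample β₂ (h₂.le.trans h₁) e t * (M t).toOuterMeasure O)
        = pexp (poissonSample β₂ (h₂.le.trans h₁) e) (fun t => (M t).toOuterMeasure O) := rfl
    rw [this, pexp_poisson_thin γ β₁ hγ1 h₁ β₂ hmul (h₂.le.trans h₁)]
    congr 1
    ext t
    rw [hνdef]
    simp only [PMF.toOuterMeasure_bind_apply]
    rfl
  -- handle the two symmetric cases
  obtain ⟨l₁, l₂, x, hc⟩ := hN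
  -- common quantities
  set U : ℝ≥0∞ := pexp (poissonSample γ hγ1 l₁) (fun s₁ =>
      pexp (poissonSample γ hγ1 l₂) (fun s₂ => ν (s₁ ++ s₂))) with hUdef
  set V : ℝ≥0∞ := pexp (poissonSample γ hγ1 l₁) (fun s₁ =>
      pexp (poissonSample γ hγ1 l₂) (fun s₂ => ν (s₁ ++ x :: s₂))) with hVdef
  have hQ' : pexp (poissonSample γ hγ1 (l₁ ++ l₂)) ν = U := by
    rw [pexp_poisson_append]
  have hQ : pexp (poissonSample γ hγ1 (l₁ ++ x :: l₂)) ν = (1 - γ) * U + γ * V := by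
    rw [pexp_poisson_append]
    simp only [pexp_poisson_cons]
    rw [pexp_add, pexp_mul_left, pexp_mul_left]
  have hU1 : U ≤ 1 := pexp_le_one _ fun s₁ => pexp_le_one _ fun s₂ => hν1 _
  have hV1 : V ≤ 1 := pexp_le_one _ fun s₁ => pexp_le_one _ fun s₂ => hν1 _
  have hUt : U ≠ ∞ := (hU1.trans_lt (by norm_num)).ne
  have hVt : V ≠ ∞ := (hV1.trans_lt (by norm_num)).ne
  -- DP hypothesis applied pointwise and aggregated
  have hVU : V ≤ a * U + δ := by
    calc V ≤ pexp (poissonSample γ hγ1 l₁) (fun s₁ =>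
        a * pexp (poissonSample γ hγ1 l₂) (fun s₂ => ν (s₁ ++ s₂)) + δ) := by
          apply pexp_mono
          intro s₁
          calc pexp (poissonSample γ hγ1 l₂) (fun s₂ => ν (s₁ ++ x :: s₂))
              ≤ pexp (poissonSample γ hγ1 l₂) (fun s₂ => a * ν (s₁ ++ s₂) + δ) := by
                apply pexp_mono
                intro s₂
                exact H _ _ ⟨s₁, s₂, x, Or.inl ⟨rfl, rfl⟩⟩ O
          _ = a * pexp (poissonSample γ hγ1 l₂) (fun s₂ => ν (s₁ ++ s₂)) + δ := by
                rw [pexp_add, pexp_mul_left, pexp_const]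
    _ = a * U + δ := by rw [pexp_add, pexp_mul_left, pexp_const]
  have hUV : U ≤ a * V + δ := by
    calc U ≤ pexp (poissonSample γ hγ1 l₁) (fun s₁ =>
        a * pexp (poissonSample γ hγ1 l₂) (fun s₂ => ν (s₁ ++ x :: s₂)) + δ) := by
          apply pexp_mono
          intro s₁
          calc pexp (poissonSample γ hγ1 l₂) (fun s₂ => ν (s₁ ++ s₂))
              ≤ pexp (poissonSample γ hγ1 l₂) (fun s₂ => a * ν (s₁ ++ x :: s₂) + δ) := by
                apply pexp_mono
                intro s₂
                exact H _ _ ⟨s₁, s₂, x, Or.inr ⟨rfl, rfl⟩⟩ O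
          _ = a * pexp (poissonSample γ hγ1 l₂) (fun s₂ => ν (s₁ ++ x :: s₂)) + δ := by
                rw [pexp_add, pexp_mul_left, pexp_const]
    _ = a * V + δ := by rw [pexp_add, pexp_mul_left, pexp_const]
  -- rewrite the DP constants
  have hA1 : (1:ℝ) ≤ Real.exp ε₁ := by
    rw [← Real.exp_zero]; exact Real.exp_le_exp.mpr hε₁
  have hgnn : (0:ℝ) ≤ γ.toReal := ENNReal.toReal_nonneg
  have hg1 : γ.toReal ≤ 1 := by
    have := ENNReal.toReal_mono (by norm_num) hγ1
    simpa using this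
  have harg : (0:ℝ) < 1 + γ.toReal * (Real.exp ε₁ - 1) := by nlinarith
  have hK : ENNReal.ofReal (Real.exp (Real.log (1 + γ.toReal * (Real.exp ε₁ - 1))))
      = 1 + γ * ENNReal.ofReal (Real.exp ε₁ - 1) := by
    rw [Real.exp_log harg, ENNReal.ofReal_add (by norm_num) (by nlinarith),
      ENNReal.ofReal_one, ENNReal.ofReal_mul hgnn, ENNReal.ofReal_toReal hγt]
  have hδ2 : ENNReal.ofReal (γ.toReal * δ₁) = γ * δ := by
    rw [ENNReal.ofReal_mul hgnn, ENNReal.ofReal_toReal hγt, hδdef]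
  -- finiteness for passing to reals
  set K : ℝ≥0∞ := 1 + γ * ENNReal.ofReal (Real.exp ε₁ - 1) with hKdef
  have hKt : K ≠ ∞ := by
    rw [hKdef]
    exact (ENNReal.add_ne_top).mpr ⟨by norm_num, ENNReal.mul_ne_top hγt ENNReal.ofReal_ne_top⟩
  have hat : a ≠ ∞ := ENNReal.ofReal_ne_top
  have hδt : δ ≠ ∞ := ENNReal.ofReal_ne_top
  -- real versions
  set u : ℝ := U.toReal with hudef
  set v : ℝ := V.toReal with hvdef
  have hunn : 0 ≤ u := ENNReal.toReal_nonneg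
  have hvnn : 0 ≤ v := ENNReal.toReal_nonneg
  have h1γ : ((1:ℝ≥0∞) - γ).toReal = 1 - γ.toReal := by
    rw [ENNReal.toReal_sub_of_le hγ1 (by norm_num)]; simp
  have hKr : K.toReal = 1 + γ.toReal * (Real.exp ε₁ - 1) := by
    rw [hKdef, ENNReal.toReal_add (by norm_num) (ENNReal.mul_ne_top hγt ENNReal.ofReal_ne_top),
      ENNReal.toReal_mul, ENNReal.toReal_ofReal (by nlinarith)]
    simp
  have har : a.toReal = Real.exp ε₁ := ENNReal.toReal_ofReal (Real.exp_pos ε₁).le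
  have hδr : δ.toReal = δ₁ := ENNReal.toReal_ofReal hδ₁
  rcases hc with ⟨hd, hd'⟩ | ⟨hd', hd⟩
  · -- d = l₁ ++ x :: l₂ (bigger), d' = l₁ ++ l₂
    subst hd; subst hd'
    rw [key, key, hQ, hQ', hK, hδ2]
    -- goal: (1-γ)*U + γ*V ≤ K*U + γ*δ
    have hUVr : u ≤ a.toReal * v + δ.toReal := by
      rw [← ENNReal.toReal_mul, ← ENNReal.toReal_add (ENNReal.mul_ne_top hat hVt) hδt]
      exact ENNReal.toReal_mono (ENNReal.add_ne_top.mpr ⟨ENNReal.mul_ne_top hat hVt, hδt⟩) hUV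
    have hVUr : v ≤ a.toReal * u + δ.toReal := by
      rw [← ENNReal.toReal_mul, ← ENNReal.toReal_add (ENNReal.mul_ne_top hat hUt) hδt]
      exact ENNReal.toReal_mono (ENNReal.add_ne_top.mpr ⟨ENNReal.mul_ne_top hat hUt, hδt⟩) hVU
    rw [har, hδr] at hVUr
    have h1γt : (1:ℝ≥0∞) - γ ≠ ∞ := (tsub_le_self.trans_lt ENNReal.one_lt_top).ne
    refine (ENNReal.toReal_le_toReal ?_ ?_).mp ?_
    · exact ENNReal.add_ne_top.mpr ⟨ENNReal.mul_ne_top h1γt hUt, ENNReal.mul_ne_top hγt hVt⟩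
    · exact ENNReal.add_ne_top.mpr ⟨ENNReal.mul_ne_top hKt hUt, ENNReal.mul_ne_top hγt hδt⟩
    · rw [ENNReal.toReal_add (ENNReal.mul_ne_top h1γt hUt) (ENNReal.mul_ne_top hγt hVt),
        ENNReal.toReal_add (ENNReal.mul_ne_top hKt hUt) (ENNReal.mul_ne_top hγt hδt),
        ENNReal.toReal_mul, ENNReal.toReal_mul, ENNReal.toReal_mul, ENNReal.toReal_mul,
        h1γ, hKr, hδr]
      nlinarith [mul_le_mul_of_nonneg_left hVUr hgnn]
  · -- d = l₁ ++ l₂ (smaller), d' = l₁ ++ x :: l₂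
    subst hd; subst hd'
    rw [key, key, hQ, hQ', hK, hδ2]
    -- goal: U ≤ K*((1-γ)*U + γ*V) + γ*δ
    have hUVr : u ≤ a.toReal * v + δ.toReal := by
      rw [← ENNReal.toReal_mul, ← ENNReal.toReal_add (ENNReal.mul_ne_top hat hVt) hδt]
      exact ENNReal.toReal_mono (ENNReal.add_ne_top.mpr ⟨ENNReal.mul_ne_top hat hVt, hδt⟩) hUV
    rw [har, hδr] at hUVr
    have hApos : (0:ℝ) < Real.exp ε₁ := Real.exp_pos ε₁
    have h1γt : (1:ℝ≥0∞) - γ ≠ ∞ := (tsub_le_self.trans_lt ENNReal.one_lt_top).ne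
    have hInt : (1 - γ) * U + γ * V ≠ ∞ :=
      ENNReal.add_ne_top.mpr ⟨ENNReal.mul_ne_top h1γt hUt, ENNReal.mul_ne_top hγt hVt⟩
    refine (ENNReal.toReal_le_toReal hUt ?_).mp ?_
    · exact ENNReal.add_ne_top.mpr ⟨ENNReal.mul_ne_top hKt hInt, ENNReal.mul_ne_top hγt hδt⟩
    · rw [ENNReal.toReal_add (ENNReal.mul_ne_top hKt hInt) (ENNReal.mul_ne_top hγt hδt),
        ENNReal.toReal_mul, ENNReal.toReal_mul,
        ENNReal.toReal_add (ENNReal.mul_ne_top h1γt hUt) (ENNReal.mul_ne_top hγt hVt),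
        ENNReal.toReal_mul, ENNReal.toReal_mul, h1γ, hKr, hδr]
      have hE1 : (0:ℝ) ≤ Real.exp ε₁ - 1 := by linarith
      have h1g : (0:ℝ) ≤ 1 - γ.toReal := by linarith
      have key2 : Real.exp ε₁ * u ≤ Real.exp ε₁ *
          ((1 + γ.toReal * (Real.exp ε₁ - 1)) * ((1 - γ.toReal) * u + γ.toReal * v)
            + γ.toReal * δ₁) := by
        nlinarith [mul_le_mul_of_nonneg_left hUVr
            (mul_nonneg hgnn (by nlinarith : (0:ℝ) ≤ 1 + γ.toReal * (Real.exp ε₁ - 1))),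
          mul_nonneg (mul_nonneg (mul_nonneg (mul_nonneg hgnn hE1) hE1) h1g) hunn,
          mul_nonneg (mul_nonneg (mul_nonneg hgnn hδ₁) hE1) h1g]
      exact le_of_mul_le_mul_left key2 hApos
end

section
/- The Laplace mechanism is ε-differentially private: for a function f : datasets → ℝ^c with ℓ1-sensitivity Δf = max over neighboring datasets D, D' of ||f(D) − f(D')||_1, the mechanism M(D) = f(D) + (v_1,...,v_c) with v_i drawn i.i.d. from the Laplace distribution with scale Δf/ε satisfies ε-DP. -/
open MeasureTheory
open scoped ENNReal

/-- The Laplace distribution with scale `b`, as a measure on `ℝ` with density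
`(1/(2b)) exp (−|x|/b)` with respect to Lebesgue measure. -/
noncomputable def laplaceMeasure (b : ℝ) : Measure ℝ :=
  volume.withDensity fun x => ENNReal.ofReal (Real.exp (-|x| / b) / (2 * b))

open MeasureTheory.Measure

lemma lint_pi {n : ℕ} (h : Fin n → ℝ → ℝ≥0∞) (hm : ∀ i, Measurable (h i)) :
    ∫⁻ x : Fin n → ℝ, ∏ i, h i (x i) = ∏ i, ∫⁻ t, h i t := by
  induction n with
  | zero => simp [volume_pi, Measure.pi_of_empty (fun _ : Fin 0 => (volume : Measure ℝ))]
  | succ n ih =>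
      calc
        _ = ∫⁻ p : ℝ × (Fin n → ℝ),
            h 0 p.1 * ∏ i : Fin n, h i.succ (p.2 i)
              ∂((volume : Measure ℝ).prod (Measure.pi fun _ : Fin n => volume)) := by
          rw [volume_pi, ← ((measurePreserving_piFinSuccAbove
            (fun _ : Fin (n+1) => (volume : Measure ℝ)) 0).symm).lintegral_comp_emb
            (MeasurableEquiv.piFinSuccAbove (fun _ : Fin (n+1) => ℝ) 0).symm.measurableEmbedding]
          congr 1
          ext p
          simp only [MeasurableEquiv.piFinSuccAbove_symm_apply, Fin.insertNthEquiv,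
            Fin.insertNth_zero, Equiv.coe_fn_mk, Fin.zero_succAbove]
          rw [Fin.prod_univ_succ]
          simp
        _ = (∫⁻ t, h 0 t) * ∏ i : Fin n, ∫⁻ t, h i.succ t := by
          rw [lintegral_prod_mul (f := h 0) (g := fun y : Fin n → ℝ => ∏ i, h i.succ (y i))
            (hm 0).aemeasurable
            (Finset.measurable_prod _ fun i _ => (hm i.succ).comp (measurable_pi_apply i)).aemeasurable]
          rw [← volume_pi, ih (fun i => h i.succ) (fun i => hm i.succ)]
        _ = ∏ i, ∫⁻ t, h i t := by rw [Fin.prod_univ_succ]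

lemma pi_wd {n : ℕ} (h : ℝ → ℝ≥0∞) (hm : Measurable h) (hfin : ∀ x, h x ≠ ∞) :
    Measure.pi (fun _ : Fin n => volume.withDensity h) =
      (volume : Measure (Fin n → ℝ)).withDensity fun x => ∏ i, h (x i) := by
  haveI : SigmaFinite (volume.withDensity h) :=
    SigmaFinite.withDensity_of_ne_top (ae_of_all _ hfin)
  refine Measure.pi_eq fun s hs => ?_
  rw [withDensity_apply _ (MeasurableSet.univ_pi hs), ← lintegral_indicator (MeasurableSet.univ_pi hs)]
  have key : ∀ x : Fin n → ℝ,
      (Set.univ.pi s).indicator (fun x => ∏ i, h (x i)) x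
        = ∏ i, (s i).indicator h (x i) := by
    intro x
    by_cases hx : x ∈ Set.univ.pi s
    · rw [Set.indicator_of_mem hx]
      exact Finset.prod_congr rfl fun i _ =>
        (Set.indicator_of_mem (hx i (Set.mem_univ i)) h).symm
    · rw [Set.indicator_of_notMem hx]
      obtain ⟨i, -, hi⟩ := Set.mem_pi.not.mp hx |> fun H => by
        push_neg at H; exact H
      exact (Finset.prod_eq_zero (Finset.mem_univ i)
        (by rw [Set.indicator_of_notMem hi])).symm
  simp_rw [key]
  rw [lint_pi (fun i => (s i).indicator h) (fun i => hm.indicator (hs i))]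
  exact Finset.prod_congr rfl fun i _ => by
    rw [lintegral_indicator (hs i), withDensity_apply _ (hs i)]

/-- The Laplace mechanism is `ε`-differentially private: for `f : D → ℝ^c` with
ℓ1-sensitivity at most `Δ` over neighboring datasets, the mechanism
`M d = f d + (v₁, ..., v_c)` with the `vᵢ` i.i.d. `Lap(Δ/ε)` satisfies
`P[M d ∈ S] ≤ exp ε * P[M d' ∈ S]` for all neighboring `d, d'` and measurable `S`. -/
theorem laplace_mechanism_dp {D : Type*} (N : D → D → Prop) (c : ℕ)
    (f : D → (Fin c → ℝ)) (Δ ε : ℝ) (hΔ : 0 < Δ) (hε : 0 < ε)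
    (hsens : ∀ d d', N d d' → ∑ i, |f d i - f d' i| ≤ Δ)
    (M : D → Measure (Fin c → ℝ))
    (hM : ∀ d, M d =
      (Measure.pi fun _ : Fin c => laplaceMeasure (Δ / ε)).map fun v => f d + v) :
    ∀ d d', N d d' → ∀ S : Set (Fin c → ℝ), MeasurableSet S →
      M d S ≤ ENNReal.ofReal (Real.exp ε) * M d' S := by
  intro d d' hN S hS
  set b : ℝ := Δ / ε with hb_def
  have hb : 0 < b := div_pos hΔ hε
  set h : ℝ → ℝ≥0∞ := fun x => ENNReal.ofReal (Real.exp (-|x| / b) / (2 * b)) with hh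
  have hhm : Measurable h := by
    apply Measurable.ennreal_ofReal
    fun_prop
  have hfin : ∀ x, h x ≠ ∞ := fun x => ENNReal.ofReal_ne_top
  have hP : (Measure.pi fun _ : Fin c => laplaceMeasure b) =
      (volume : Measure (Fin c → ℝ)).withDensity (fun x => ∏ i, h (x i)) :=
    pi_wd h hhm hfin
  have hGm : Measurable fun x : Fin c → ℝ => ∏ i, h (x i) :=
    Finset.measurable_prod _ fun i _ => hhm.comp (measurable_pi_apply i)
  have key : ∀ e : D, M e S = ∫⁻ x in S, (∏ i, h (x i - f e i)) ∂(volume) := by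
    intro e
    have hadd : Measurable fun v : Fin c → ℝ => f e + v := measurable_id.const_add (f e)
    rw [hM e, Measure.map_apply hadd hS, hP, withDensity_apply _ (hadd hS)]
    have := (measurePreserving_add_left (volume : Measure (Fin c → ℝ)) (f e)).setLIntegral_comp_preimage
      (s := S) hS (f := fun x => ∏ i, h (x i - f e i))
      (Finset.measurable_prod _ fun i _ =>
        hhm.comp ((measurable_pi_apply i).sub measurable_const))
    rw [← this]
    refine setLIntegral_congr_fun (hadd hS) (fun v _ => ?_)
    exact Finset.prod_congr rfl fun i _ => by simp
  rw [key d, key d']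
  rw [← lintegral_const_mul' _ _ ENNReal.ofReal_ne_top]
  refine setLIntegral_mono' hS fun x _ => ?_
  -- pointwise density comparison
  have h2b : (0:ℝ) < 2 * b := by linarith
  have hprod : ∀ e : D, (∏ i, h (x i - f e i))
      = ENNReal.ofReal (Real.exp (∑ i, -|x i - f e i| / b) / (2 * b) ^ c) := by
    intro e
    rw [← ENNReal.ofReal_prod_of_nonneg (fun i _ => by positivity)]
    congr 1
    rw [Finset.prod_div_distrib, Real.exp_sum]
    simp [Finset.card_univ]
  rw [hprod d, hprod d', ← ENNReal.ofReal_mul (Real.exp_pos ε).le]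
  apply ENNReal.ofReal_le_ofReal
  have hsum2 : ∑ i, |x i - f d' i| ≤ Δ + ∑ i, |x i - f d i| := by
    have h1 := Finset.sum_le_sum (s := Finset.univ)
      (fun i _ => abs_sub_le (x i) (f d i) (f d' i))
    rw [Finset.sum_add_distrib] at h1
    have h2 := hsens d d' hN
    linarith
  have hexp : Real.exp (∑ i, -|x i - f d i| / b)
      ≤ Real.exp ε * Real.exp (∑ i, -|x i - f d' i| / b) := by
    rw [← Real.exp_add]
    apply Real.exp_le_exp.2
    have hrw : ∀ e : D, (∑ i, -|x i - f e i| / b) = -((∑ i, |x i - f e i|) / b) := by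
      intro e
      rw [Finset.sum_div, ← Finset.sum_neg_distrib]
      exact Finset.sum_congr rfl fun i _ => neg_div _ _
    rw [hrw d, hrw d']
    have hΔb : Δ / b = ε := by
      rw [hb_def]; field_simp
    have h3 : (∑ i, |x i - f d' i|) / b ≤ ε + (∑ i, |x i - f d i|) / b := by
      calc (∑ i, |x i - f d' i|) / b ≤ (Δ + ∑ i, |x i - f d i|) / b := by gcongr
        _ = Δ / b + (∑ i, |x i - f d i|) / b := add_div _ _ _
        _ = ε + (∑ i, |x i - f d i|) / b := by rw [hΔb]
    linarith
  have hmd : Real.exp ε * (Real.exp (∑ i, -|x i - f d' i| / b) / (2 * b) ^ c)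
      = (Real.exp ε * Real.exp (∑ i, -|x i - f d' i| / b)) / (2 * b) ^ c :=
    (mul_div_assoc _ _ _).symm
  rw [hmd]
  gcongr
end
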